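/- Let p ≥ 5 be a real number, λ ∈ (0, π²/4], and let u ∈ C²([0,1]) satisfy u''(r) + (2/r) u'(r) + λ u(r) + u(r)|u(r)|^{p-1} = 0 for 0 < r < 1, with u'(0) = u(1) = 0. Then, with ψ(r) = sin(2√λ r), one has ∫₀¹ [ ((p+3)/(p+1)) ψ'(r) r² − (2(p−1)/(p+1)) ψ(r) r ] |u(r)|^{p+1} dr = ψ(1) (u'(1))², and the coefficient ((p+3)/(p+1)) ψ'(r) r² − (2(p−1)/(p+1)) ψ(r) r is strictly negative for every r ∈ (0,1]. -/

import Mathlib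

set_option maxHeartbeats 1000000

open Set Real

private lemma sin_sub_mul_cos_pos : ∀ x : ℝ, 0 < x → x ≤ π → x * Real.cos x < Real.sin x := by
  intro x hx0 hxpi
  have hd : ∀ y : ℝ, HasDerivAt (fun t => Real.sin t - t * Real.cos t) (y * Real.sin y) y := by
    intro y
    have h2 : HasDerivAt (fun t : ℝ => t * Real.cos t) (1 * Real.cos y + y * (-Real.sin y)) y :=
      (hasDerivAt_id y).mul (Real.hasDerivAt_cos y)
    have h := (Real.hasDerivAt_sin y).sub h2
    exact h.congr_deriv (by ring)
  have mono : StrictMonoOn (fun t => Real.sin t - t * Real.cos t) (Icc 0 π) := by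
    apply strictMonoOn_of_deriv_pos (convex_Icc 0 π)
    · exact (by continuity : Continuous fun t : ℝ => Real.sin t - t * Real.cos t).continuousOn
    · intro y hy
      rw [interior_Icc] at hy
      rw [(hd y).deriv]
      exact mul_pos hy.1 (Real.sin_pos_of_pos_of_lt_pi hy.1 hy.2)
  have h0 : (0:ℝ) ∈ Icc (0:ℝ) π := ⟨le_refl _, Real.pi_pos.le⟩
  have hxm : x ∈ Icc (0:ℝ) π := ⟨hx0.le, hxpi⟩
  have := mono h0 hxm hx0
  simp at this
  linarith

private lemma abs_rpow_eq_sq_rpow (x q : ℝ) : |x| ^ q = (x ^ 2) ^ (q / 2) := by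
  rw [← sq_abs x, ← Real.rpow_natCast |x| 2, ← Real.rpow_mul (abs_nonneg x)]
  norm_num
  congr 1
  ring

private lemma sq_rpow_succ (p x : ℝ) (hp : 5 ≤ p) :
    (x ^ 2) ^ ((p + 1) / 2) = (x ^ 2) ^ ((p - 1) / 2) * x ^ 2 := by
  rcases eq_or_ne x 0 with h | h
  · rw [h]
    norm_num
    rw [Real.zero_rpow (by positivity)]
  · have he : (p + 1) / 2 = (p - 1) / 2 + 1 := by ring
    rw [he, Real.rpow_add (by positivity), Real.rpow_one]

/-- The key step of the non-existence proof in Example 1: with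
`ψ(r) = sin(2√λ r)` (so `ψ'(r) = 2√λ cos(2√λ r)`), the Pohozhaev-type
identity reduces to
`∫₀¹ [((p+3)/(p+1)) ψ' r² - (2(p-1)/(p+1)) ψ r] |u|^{p+1} dr = ψ(1) u'(1)²`,
and the coefficient in the integrand is strictly negative on `(0,1]`. -/
theorem pohozhaev_sine_multiplier
    (p : ℝ) (hp : 5 ≤ p) (lam : ℝ) (hlam : lam ∈ Ioc (0:ℝ) (π ^ 2 / 4))
    (u u' u'' : ℝ → ℝ)
    (hu : ∀ r ∈ Icc (0:ℝ) 1, HasDerivAt u (u' r) r)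
    (hu' : ∀ r ∈ Icc (0:ℝ) 1, HasDerivAt u' (u'' r) r)
    (hu''c : ContinuousOn u'' (Icc (0:ℝ) 1))
    (hode : ∀ r ∈ Ioo (0:ℝ) 1,
      u'' r + 2 / r * u' r + lam * u r + u r * |u r| ^ (p - 1) = 0)
    (hbc0 : u' 0 = 0) (hbc1 : u 1 = 0) :
    (∫ r in (0:ℝ)..1,
        ((p + 3) / (p + 1) * (2 * Real.sqrt lam * cos (2 * Real.sqrt lam * r)) * r ^ 2
          - 2 * (p - 1) / (p + 1) * sin (2 * Real.sqrt lam * r) * r)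
          * |u r| ^ (p + 1))
      = sin (2 * Real.sqrt lam) * (u' 1) ^ 2
    ∧ ∀ r ∈ Ioc (0:ℝ) 1,
        (p + 3) / (p + 1) * (2 * Real.sqrt lam * cos (2 * Real.sqrt lam * r)) * r ^ 2
          - 2 * (p - 1) / (p + 1) * sin (2 * Real.sqrt lam * r) * r < 0 := by
  obtain ⟨hlam0, hlampi⟩ := hlam
  set s : ℝ := 2 * Real.sqrt lam with hs
  have hp1 : (0:ℝ) < p + 1 := by linarith
  have hspos : 0 < s := by
    have := Real.sqrt_pos.mpr hlam0
    positivity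
  have hs2 : s ^ 2 = 4 * lam := by
    rw [hs, mul_pow, Real.sq_sqrt hlam0.le]; ring
  have hslepi : s ≤ π := by
    have h1 : Real.sqrt lam ≤ Real.sqrt (π ^ 2 / 4) := Real.sqrt_le_sqrt hlampi
    have h2 : Real.sqrt (π ^ 2 / 4) = π / 2 := by
      rw [show π ^ 2 / 4 = (π / 2) ^ 2 by ring, Real.sqrt_sq (by positivity)]
    rw [h2] at h1
    rw [hs]; linarith
  constructor
  · -- the integral identity
    -- the explicit antiderivative
    set B : ℝ → ℝ := fun r =>
      sin (s*r) * r^2 * (u' r)^2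
      + sin (s*r) * r^2 * (lam * (u r)^2 + 2/(p+1) * ((u r)^2)^((p+1)/2))
      + (2*sin (s*r)*r - s*cos (s*r)*r^2) * (u r * u' r)
      - (s*cos (s*r)*r - sin (s*r) + 2*lam*sin (s*r)*r^2) * (u r)^2 with hB
    set g : ℝ → ℝ := fun r =>
      ((p + 3) / (p + 1) * (s * cos (s * r)) * r ^ 2
          - 2 * (p - 1) / (p + 1) * sin (s * r) * r) * ((u r)^2) ^ ((p+1)/2) with hg
    have hucont : ContinuousOn u (Icc 0 1) := fun r hr =>
      (hu r hr).continuousAt.continuousWithinAt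
    have hu'cont : ContinuousOn u' (Icc 0 1) := fun r hr =>
      (hu' r hr).continuousAt.continuousWithinAt
    have hYcont : ContinuousOn (fun r => ((u r)^2) ^ ((p+1)/2)) (Icc 0 1) :=
      (hucont.pow 2).rpow_const (fun x _ => Or.inr (by positivity))
    have hsincont : Continuous fun r : ℝ => Real.sin (s * r) :=
      Real.continuous_sin.comp (continuous_const.mul continuous_id)
    have hcoscont : Continuous fun r : ℝ => Real.cos (s * r) :=
      Real.continuous_cos.comp (continuous_const.mul continuous_id)
    have hBcont : ContinuousOn B (Icc 0 1) := by
      rw [hB]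
      apply ContinuousOn.sub
      apply ContinuousOn.add
      apply ContinuousOn.add
      · exact (hsincont.continuousOn.mul (continuous_pow 2).continuousOn).mul
          (hu'cont.pow 2)
      · exact (hsincont.continuousOn.mul (continuous_pow 2).continuousOn).mul
          (((continuousOn_const.mul (hucont.pow 2))).add
            (continuousOn_const.mul hYcont))
      · exact (((continuous_const.mul hsincont).mul continuous_id).continuousOn.sub
          ((continuous_const.mul hcoscont).mul (continuous_pow 2)).continuousOn).mul
          (hucont.mul hu'cont)
      · exact ((((continuous_const.mul hcoscont).mul continuous_id).continuousOn.sub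
          hsincont.continuousOn).add
          ((continuous_const.mul hsincont).mul (continuous_pow 2)).continuousOn).mul
          (hucont.pow 2)
    have hgint : IntervalIntegrable g MeasureTheory.volume 0 1 := by
      apply ContinuousOn.intervalIntegrable
      rw [uIcc_of_le (by norm_num : (0:ℝ) ≤ 1)]
      exact ((((continuous_const.mul (continuous_const.mul hcoscont)).mul
        (continuous_pow 2)).sub
        ((continuous_const.mul hsincont).mul continuous_id)).continuousOn).mul hYcont
    have hderiv : ∀ r ∈ Ioo (0:ℝ) 1, HasDerivAt B (g r) r := by
      intro r hr
      have hrIcc : r ∈ Icc (0:ℝ) 1 := ⟨hr.1.le, hr.2.le⟩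
      have hr0 : r ≠ 0 := ne_of_gt hr.1
      have hur := hu r hrIcc
      have hu'r := hu' r hrIcc
      have hlin : HasDerivAt (fun t : ℝ => s * t) s r := by
        simpa using (hasDerivAt_id r).const_mul s
      have hsin := hlin.sin
      have hcos := hlin.cos
      have hid : HasDerivAt (fun t : ℝ => t) 1 r := hasDerivAt_id r
      have hr2 : HasDerivAt (fun t : ℝ => t ^ 2) (2 * r) r := by
        simpa using hasDerivAt_pow 2 r
      have husq : HasDerivAt (fun t => u t ^ 2) (2 * u r * u' r) r := by
        simpa using hur.fun_pow 2
      have hu'sq : HasDerivAt (fun t => u' t ^ 2) (2 * u' r * u'' r) r := by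
        simpa using hu'r.fun_pow 2
      have hY : HasDerivAt (fun t => ((u t)^2) ^ ((p+1)/2))
          ((p+1) * ((u r)^2) ^ ((p-1)/2) * (u r * u' r)) r := by
        have h := husq.rpow_const (Or.inr (by linarith : (1:ℝ) ≤ (p+1)/2))
        convert h using 1
        rw [show (p+1)/2 - 1 = (p-1)/2 by ring]
        ring
      have H :=
        ((((hsin.mul hr2).mul hu'sq).add
          ((hsin.mul hr2).mul ((husq.const_mul lam).add (hY.const_mul (2/(p+1)))))).add
          ((((hsin.const_mul 2).mul hid).sub ((hcos.const_mul s).mul hr2)).mul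
            (hur.mul hu'r))).sub
          (((((hcos.const_mul s).mul hid).sub hsin).add
            ((hsin.const_mul (2*lam)).mul hr2)).mul husq)
      refine H.congr_deriv (Eq.symm ?_)
      have hodeEq := hode r hr
      rw [abs_rpow_eq_sq_rpow] at hodeEq
      have hu''eq : u'' r =
          -(2 / r * u' r + lam * u r + u r * ((u r)^2) ^ ((p-1)/2)) := by linarith
      rw [hg]
      simp only [Pi.mul_apply, Pi.add_apply, Pi.sub_apply]
      rw [sq_rpow_succ p (u r) hp, hu''eq,
        show lam = s ^ 2 / 4 by rw [hs2]; ring]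
      field_simp
      ring
    have key := intervalIntegral.integral_eq_sub_of_hasDerivAt_of_le
      (by norm_num : (0:ℝ) ≤ 1) hBcont hderiv hgint
    have hB1 : B 1 = sin s * (u' 1) ^ 2 := by
      rw [hB]; simp [hbc1, Real.zero_rpow (show ((p:ℝ)+1)/2 ≠ 0 by positivity)]
    have hB0 : B 0 = 0 := by
      rw [hB]; norm_num
    have hint_eq : (∫ r in (0:ℝ)..1,
        ((p + 3) / (p + 1) * (s * cos (s * r)) * r ^ 2
          - 2 * (p - 1) / (p + 1) * sin (s * r) * r) * |u r| ^ (p + 1))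
        = ∫ r in (0:ℝ)..1, g r := by
      apply intervalIntegral.integral_congr
      intro r _
      rw [hg]
      simp only
      rw [abs_rpow_eq_sq_rpow]
    calc (∫ r in (0:ℝ)..1,
        ((p + 3) / (p + 1) * (s * cos (s * r)) * r ^ 2
          - 2 * (p - 1) / (p + 1) * sin (s * r) * r) * |u r| ^ (p + 1))
        = ∫ r in (0:ℝ)..1, g r := hint_eq
      _ = B 1 - B 0 := key
      _ = sin s * (u' 1) ^ 2 := by rw [hB1, hB0]; ring
  · -- negativity of the coefficient
    rintro r ⟨hr0, hr1⟩
    have hx0 : 0 < s * r := mul_pos hspos hr0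
    have hxpi : s * r ≤ π := by nlinarith
    have hsin_nonneg : 0 ≤ Real.sin (s * r) :=
      Real.sin_nonneg_of_nonneg_of_le_pi hx0.le hxpi
    have hkey := sin_sub_mul_cos_pos (s * r) hx0 hxpi
    have hG : (p + 3) * (s * r) * Real.cos (s * r) - 2 * (p - 1) * Real.sin (s * r) < 0 := by
      nlinarith [mul_lt_mul_of_pos_left hkey (show (0:ℝ) < p + 3 by linarith),
        mul_nonneg (show (0:ℝ) ≤ p - 5 by linarith) hsin_nonneg]
    have hE : (p + 3) / (p + 1) * (s * cos (s * r)) * r ^ 2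
          - 2 * (p - 1) / (p + 1) * sin (s * r) * r
        = r / (p + 1) * ((p + 3) * (s * r) * Real.cos (s * r)
            - 2 * (p - 1) * Real.sin (s * r)) := by
      field_simp
    rw [hE]
    exact mul_neg_of_pos_of_neg (by positivity) hG
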